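/- Let (B, A, e, l, i) be a cleft extension of abelian categories with enough projectives, and set p_A = sup{pd_B e(P) : P projective in A}, p_B = sup{pd_A i(P') : P' projective in B}, n_H = sup{pd_A H(B) : B an object of B}. Then for every object A of A and every object B of B: (i) pd_B e(A) ≤ pd_A A + p_A; (ii) pd_A i(B) ≤ pd_B B + p_B; (iii) pd_A l(B) ≤ max{n_H, pd_B B + p_B}. -/

import Mathlib

open CategoryTheory CategoryTheory.Limits

universe v u v' u'

/-- A cleft extension of abelian categories: `e` is faithful exact, `(l, e)` is an adjoint
pair, and `e ∘ i` is naturally isomorphic to the identity of `B`. -/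
structure CleftExt (B : Type u) (A : Type u') [Category.{v} B] [Category.{v'} A]
    [Abelian B] [Abelian A] where
  i : B ⥤ A
  e : A ⥤ B
  l : B ⥤ A
  e_faithful : e.Faithful
  e_preservesFiniteLimits : PreservesFiniteLimits e
  e_preservesFiniteColimits : PreservesFiniteColimits e
  adj : l ⊣ e
  iso : i ⋙ e ≅ 𝟭 B

/-- `pdLE n M` : the object `M` admits a projective resolution of length at most `n`. -/
def pdLE {C : Type u} [Category.{v} C] [Abelian C] : ℕ → C → Prop
  | 0, M => Projective M
  | (n+1), M => Projective M ∨ ∃ (P : C) (f : P ⟶ M), Epi f ∧ Projective P ∧ pdLE n (kernel f)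

/-- The projective dimension of an object of an abelian category, valued in `ℕ∞`
(`⊤` if the object has no finite projective resolution). -/
noncomputable def pdim {C : Type u} [Category.{v} C] [Abelian C] (M : C) : ℕ∞ :=
  sInf {n : ℕ∞ | ∃ m : ℕ, n = (m : ℕ∞) ∧ pdLE m M}

/-- The finitistic dimension of an abelian category with enough projectives: the supremum of
the projective dimensions of the objects of finite projective dimension. -/
noncomputable def findimCat (C : Type u) [Category.{v} C] [Abelian C] : ℕ∞ :=
  ⨆ (M : C) (_ : pdim M ≠ ⊤), pdim M

variable {B : Type u} {A : Type u'} [Category.{v} B] [Category.{v'} A] [Abelian B] [Abelian A]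

/-- The functor `G` associated to a cleft extension, `G(X) = Ker ε_X`. -/
noncomputable def CleftExt.G (C : CleftExt B A) (X : A) : A :=
  kernel (C.adj.counit.app X)

/-- The functor `H` associated to a cleft extension, `H(Y) = G(i(Y))`. -/
noncomputable def CleftExt.H (C : CleftExt B A) (Y : B) : A :=
  C.G (C.i.obj Y)

/-- `p_A`, the supremum of the projective dimensions of `e(P)` over projectives `P` of `A`. -/
noncomputable def CleftExt.pA (C : CleftExt B A) : ℕ∞ :=
  ⨆ (P : A) (_ : Projective P), pdim (C.e.obj P)

/-- `p_B`, the supremum of the projective dimensions of `i(P')` over projectives `P'` of `B`. -/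
noncomputable def CleftExt.pB (C : CleftExt B A) : ℕ∞ :=
  ⨆ (P : B) (_ : Projective P), pdim (C.i.obj P)

/-- `n_H`, the supremum of the projective dimensions of `H(Y)` over all objects `Y` of `B`. -/
noncomputable def CleftExt.nH (C : CleftExt B A) : ℕ∞ :=
  ⨆ (Y : B), pdim (C.H Y)

/-- `n_G`, the supremum of the projective dimensions of `G(X)` over all objects `X` of `A`. -/
noncomputable def CleftExt.nG (C : CleftExt B A) : ℕ∞ :=
  ⨆ (X : A), pdim (C.G X)

section PdAux

variable {𝒞 : Type*} [Category 𝒞] [Abelian 𝒞]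

theorem pdLE_of_iso : ∀ {n : ℕ} {X Y : 𝒞}, (X ≅ Y) → pdLE n X → pdLE n Y
  | 0, _, _, φ, h => Projective.of_iso φ h
  | (n+1), _, _, φ, h => by
    rcases h with h | ⟨P, f, hf, hP, hk⟩
    · exact Or.inl (Projective.of_iso φ h)
    · haveI := hf
      refine Or.inr ⟨P, f ≫ φ.hom, inferInstance, hP, ?_⟩
      exact pdLE_of_iso (kernelCompMono f φ.hom).symm hk

theorem pdLE_succ : ∀ {n : ℕ} {X : 𝒞}, pdLE n X → pdLE (n+1) X
  | 0, _, h => Or.inl h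
  | (n+1), _, h => by
    rcases h with h | ⟨P, f, hf, hP, hk⟩
    · exact Or.inl h
    · exact Or.inr ⟨P, f, hf, hP, pdLE_succ hk⟩

theorem pdLE_mono {X : 𝒞} {m n : ℕ} (h : m ≤ n) (hX : pdLE m X) : pdLE n X := by
  induction n with
  | zero => obtain rfl := Nat.le_zero.mp h; exact hX
  | succ n ih =>
    rcases Nat.eq_or_lt_of_le h with rfl | h'
    · exact hX
    · exact pdLE_succ (ih (Nat.lt_succ_iff.mp h'))

theorem pdim_le_iff {X : 𝒞} {n : ℕ} : pdim X ≤ (n : ℕ∞) ↔ pdLE n X := by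
  constructor
  · intro h
    by_contra hn
    have hlt : ∀ s ∈ {k : ℕ∞ | ∃ m : ℕ, k = (m : ℕ∞) ∧ pdLE m X}, (n : ℕ∞) < s := by
      rintro s ⟨m, rfl, hm⟩
      by_contra hle
      push_neg at hle
      exact hn (pdLE_mono (by exact_mod_cast hle) hm)
    have h2 : (n : ℕ∞) + 1 ≤ pdim X :=
      le_sInf fun s hs => (ENat.add_one_le_iff (by simp)).mpr (hlt s hs)
    have h3 := h2.trans h
    have : (n : ℕ∞) < (n : ℕ∞) + 1 := by
      exact_mod_cast lt_of_lt_of_le (by exact_mod_cast Nat.lt_succ_self n) le_rfl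
    exact absurd (h3.trans_lt this) (lt_irrefl _)
  · intro h
    exact sInf_le ⟨n, rfl, h⟩

/-- kernel of `biprod.map f (𝟙 Q)` is the kernel of `f`. -/
noncomputable def kernelBiprodMapIso {K K' Q : 𝒞} (f : K' ⟶ K) :
    kernel (biprod.map f (𝟙 Q)) ≅ kernel f where
  hom := kernel.lift f (kernel.ι _ ≫ biprod.fst) (by
    rw [Category.assoc, ← biprod.map_fst f (𝟙 Q), ← Category.assoc, kernel.condition, zero_comp])
  inv := kernel.lift _ (kernel.ι f ≫ biprod.inl) (by
    rw [Category.assoc, biprod.inl_map, ← Category.assoc, kernel.condition, zero_comp])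
  hom_inv_id := by
    have hsnd : kernel.ι (biprod.map f (𝟙 Q)) ≫ biprod.snd = 0 := by
      have hh : (biprod.snd : K' ⊞ Q ⟶ Q) = biprod.map f (𝟙 Q) ≫ biprod.snd := by simp
      rw [hh, ← Category.assoc, kernel.condition, zero_comp]
    apply equalizer.hom_ext
    simp only [Category.assoc, kernel.lift_ι, Category.id_comp]
    apply biprod.hom_ext <;> simp [hsnd]
  inv_hom_id := by
    apply equalizer.hom_ext
    simp

/-- A split epimorphism onto a projective object exhibits its source as a biproduct. -/
noncomputable def splitEpiIso {M X : 𝒞} (f : M ⟶ X) [Epi f] (hX : Projective X) :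
    M ≅ kernel f ⊞ X := by
  haveI := hX
  let s : X ⟶ M := Projective.factorThru (𝟙 X) f
  have hs : s ≫ f = 𝟙 X := Projective.factorThru_comp _ _
  have hq : (𝟙 M - f ≫ s) ≫ f = 0 := by
    simp [Preadditive.sub_comp, Category.assoc, hs]
  let r : M ⟶ kernel f := kernel.lift f (𝟙 M - f ≫ s) hq
  have hr : r ≫ kernel.ι f = 𝟙 M - f ≫ s := kernel.lift_ι _ _ _
  refine ⟨biprod.lift r f, biprod.desc (kernel.ι f) s, ?_, ?_⟩
  · rw [biprod.lift_desc, hr]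
    simp
  · have h1 : kernel.ι f ≫ r = 𝟙 (kernel f) := by
      rw [← cancel_mono (kernel.ι f)]
      simp [hr, Preadditive.comp_sub]
    have h2 : s ≫ r = 0 := by
      rw [← cancel_mono (kernel.ι f), Category.assoc, hr, Preadditive.comp_sub,
        Category.comp_id, zero_comp, ← Category.assoc, hs, Category.id_comp, sub_self]
    apply biprod.hom_ext' <;> apply biprod.hom_ext <;>
      simp [h1, h2, hs]

/-- The kernel of the second projection of a pullback is the kernel of the first map. -/
noncomputable def kernelPullbackSndIso {X Y Z : 𝒞} (f : X ⟶ Z) (g : Y ⟶ Z) :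
    kernel (pullback.snd f g) ≅ kernel f where
  hom := kernel.lift f (kernel.ι _ ≫ pullback.fst f g) (by
    rw [Category.assoc, pullback.condition, ← Category.assoc, kernel.condition, zero_comp])
  inv := kernel.lift _ (pullback.lift (kernel.ι f) 0 (by simp)) (by simp [pullback.lift_fst, pullback.lift_snd])
  hom_inv_id := by
    apply equalizer.hom_ext
    simp only [Category.assoc, kernel.lift_ι, Category.id_comp]
    apply pullback.hom_ext
    · simp [pullback.lift_fst, pullback.lift_snd]
    · simp [kernel.condition, pullback.lift_fst, pullback.lift_snd]
  inv_hom_id := by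
    apply equalizer.hom_ext
    simp [pullback.lift_fst, pullback.lift_snd]

/-- The kernel of the first projection of a pullback is the kernel of the second map. -/
noncomputable def kernelPullbackFstIso {X Y Z : 𝒞} (f : X ⟶ Z) (g : Y ⟶ Z) :
    kernel (pullback.fst f g) ≅ kernel g where
  hom := kernel.lift g (kernel.ι _ ≫ pullback.snd f g) (by
    rw [Category.assoc, ← pullback.condition, ← Category.assoc, kernel.condition, zero_comp])
  inv := kernel.lift _ (pullback.lift 0 (kernel.ι g) (by simp)) (by simp [pullback.lift_fst, pullback.lift_snd])
  hom_inv_id := by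
    apply equalizer.hom_ext
    simp only [Category.assoc, kernel.lift_ι, Category.id_comp]
    apply pullback.hom_ext
    · simp [kernel.condition, pullback.lift_fst, pullback.lift_snd]
    · simp [pullback.lift_fst, pullback.lift_snd]
  inv_hom_id := by
    apply equalizer.hom_ext
    simp [pullback.lift_fst, pullback.lift_snd]

/-- The kernel of a composite `p ≫ f` is the pullback of `p` along `kernel.ι f`. -/
noncomputable def pullbackKernelCompIso {P M X : 𝒞} (p : P ⟶ M) (f : M ⟶ X) :
    pullback p (kernel.ι f) ≅ kernel (p ≫ f) where
  hom := kernel.lift _ (pullback.fst p (kernel.ι f)) (by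
    rw [← Category.assoc, pullback.condition, Category.assoc, kernel.condition, comp_zero])
  inv := pullback.lift (kernel.ι _)
    (kernel.lift f (kernel.ι _ ≫ p) (by rw [Category.assoc, kernel.condition]))
    (by rw [kernel.lift_ι])
  hom_inv_id := by
    apply pullback.hom_ext
    · simp [pullback.lift_fst, pullback.lift_snd]
    · rw [← cancel_mono (kernel.ι f)]
      simp [pullback.condition, pullback.lift_fst, pullback.lift_snd]
  inv_hom_id := by
    apply equalizer.hom_ext
    simp [pullback.lift_fst, pullback.lift_snd]

set_option synthInstance.maxHeartbeats 1000000 in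
theorem pdLE_biprod {n : ℕ} {K Q : 𝒞} (hK : pdLE n K) (hQ : Projective Q) :
    pdLE n (K ⊞ Q) := by
  haveI := hQ
  match n, hK with
  | 0, hK => haveI : Projective K := hK; exact (inferInstance : Projective (K ⊞ Q))
  | (n+1), Or.inl hK => haveI : Projective K := hK; exact Or.inl (inferInstance : Projective (K ⊞ Q))
  | (n+1), Or.inr ⟨P, f, hf, hP, hk⟩ =>
    haveI := hf; haveI := hP
    have hepi : Epi (biprod.map f (𝟙 Q)) := by
      constructor
      intro Z g h w
      apply biprod.hom_ext'
      · have h1 := congrArg (fun t => biprod.inl ≫ t) w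
        simp only [← Category.assoc, biprod.inl_map] at h1
        simp only [Category.assoc] at h1
        exact (cancel_epi f).mp h1
      · have h2 := congrArg (fun t => biprod.inr ≫ t) w
        simp only [← Category.assoc, biprod.inr_map] at h2
        simpa using h2
    exact Or.inr ⟨P ⊞ Q, biprod.map f (𝟙 Q), hepi, inferInstance,
      pdLE_of_iso (kernelBiprodMapIso f).symm hk⟩

theorem pdLE_L12 : ∀ n : ℕ,
    (∀ a b : ℕ, a + b ≤ n → ∀ {M X : 𝒞} (f : M ⟶ X), Epi f →
      pdLE a (kernel f) → pdLE b X → pdLE (max a b) M) ∧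
    (∀ a b : ℕ, a + b ≤ n → ∀ {M X : 𝒞} (f : M ⟶ X), Epi f →
      pdLE a M → pdLE b (kernel f) → pdLE (max a (b+1)) X) := by
  intro n
  induction n using Nat.strong_induction_on with
  | _ n ih =>
    constructor
    · intro a b hab M X f hf hK hX
      haveI := hf
      by_cases hXp : Projective X
      · exact pdLE_mono (le_max_left a b) (pdLE_of_iso (splitEpiIso f hXp).symm
          (pdLE_biprod hK hXp))
      · match b, hX, hab with
        | 0, hX, _ => exact absurd hX hXp
        | (b+1), Or.inl hX, _ => exact absurd hX hXp
        | (b+1), Or.inr ⟨Q, q, hq, hQ, hKX⟩, hab =>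
          haveI := hq; haveI := hQ
          have hN : pdLE a (pullback f q) :=
            pdLE_of_iso (splitEpiIso (pullback.snd f q) hQ).symm
              (pdLE_biprod (pdLE_of_iso (kernelPullbackSndIso f q).symm hK) hQ)
          have hKfst : pdLE b (kernel (pullback.fst f q)) :=
            pdLE_of_iso (kernelPullbackFstIso f q).symm hKX
          exact (ih (a+b) (by omega)).2 a b le_rfl (pullback.fst f q)
            inferInstance hN hKfst
    · intro a b hab M X f hf hM hK
      haveI := hf
      by_cases hMp : Projective M
      · exact pdLE_mono (le_max_right a (b+1)) (Or.inr ⟨M, f, hf, hMp, hK⟩)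
      · match a, hM, hab with
        | 0, hM, _ => exact absurd hM hMp
        | (a+1), Or.inl h, _ => exact absurd h hMp
        | (a+1), Or.inr ⟨P, p, hp, hP, hKM⟩, hab =>
          haveI := hp; haveI := hP
          have h1 : pdLE a (kernel (pullback.snd p (kernel.ι f))) :=
            pdLE_of_iso (kernelPullbackSndIso p (kernel.ι f)).symm hKM
          have h2 : pdLE (max a b) (pullback p (kernel.ι f)) :=
            (ih (a+b) (by omega)).1 a b le_rfl (pullback.snd p (kernel.ι f))
              inferInstance h1 hK
          have h3 : pdLE (max a b) (kernel (p ≫ f)) :=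
            pdLE_of_iso (pullbackKernelCompIso p f) h2
          have h4 : pdLE (max a b + 1) X := Or.inr ⟨P, p ≫ f, inferInstance, hP, h3⟩
          have hmax : max (a+1) (b+1) = max a b + 1 := by omega
          rw [hmax]
          exact h4

theorem pdLE_of_epi_of_kernel {M X : 𝒞} (f : M ⟶ X) [Epi f]
    {a b : ℕ} (hK : pdLE a (kernel f)) (hX : pdLE b X) : pdLE (max a b) M :=
  (pdLE_L12 (a+b)).1 a b le_rfl f inferInstance hK hX

theorem pdLE_of_epi_of_kernel' {M X : 𝒞} (f : M ⟶ X) [Epi f]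
    {a b : ℕ} (hM : pdLE a M) (hK : pdLE b (kernel f)) : pdLE (max a (b+1)) X :=
  (pdLE_L12 (a+b)).2 a b le_rfl f inferInstance hM hK

theorem pdLE_map {𝒟 : Type*} [Category 𝒟] [Abelian 𝒟]
    (F : 𝒞 ⥤ 𝒟)
    (hepi : ∀ {X Y : 𝒞} (f : X ⟶ Y), Epi f → Epi (F.map f))
    (hker : ∀ {X Y : 𝒞} (f : X ⟶ Y), Epi f → Nonempty (kernel (F.map f) ≅ F.obj (kernel f)))
    {p : ℕ} (hP : ∀ P : 𝒞, Projective P → pdLE p (F.obj P)) :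
    ∀ {n : ℕ} {X : 𝒞}, pdLE n X → pdLE (n + p) (F.obj X) := by
  intro n
  induction n with
  | zero => intro X h; exact pdLE_mono (by omega) (hP X h)
  | succ n ihn =>
    intro X h
    rcases h with h | ⟨P, f, hf, hPp, hk⟩
    · exact pdLE_mono (by omega) (hP X h)
    · haveI := hf
      haveI := hepi f hf
      obtain ⟨iso⟩ := hker f hf
      have h1 : pdLE (n + p) (kernel (F.map f)) :=
        pdLE_of_iso iso.symm (ihn hk)
      have h2 : pdLE p (F.obj P) := hP P hPp
      exact pdLE_mono (by omega) (pdLE_of_epi_of_kernel' (F.map f) h2 h1)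

theorem pdim_map_le {𝒟 : Type*} [Category 𝒟] [Abelian 𝒟]
    (F : 𝒞 ⥤ 𝒟)
    (hepi : ∀ {X Y : 𝒞} (f : X ⟶ Y), Epi f → Epi (F.map f))
    (hker : ∀ {X Y : 𝒞} (f : X ⟶ Y), Epi f → Nonempty (kernel (F.map f) ≅ F.obj (kernel f)))
    (p : ℕ∞) (hP : ∀ P : 𝒞, Projective P → pdim (F.obj P) ≤ p)
    (X : 𝒞) : pdim (F.obj X) ≤ pdim X + p := by
  rcases eq_or_ne p ⊤ with rfl | hp
  · simp
  rcases eq_or_ne (pdim X) ⊤ with h | h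
  · rw [h, top_add]; exact le_top
  obtain ⟨n, hn0⟩ := WithTop.ne_top_iff_exists.mp h
  obtain ⟨m, hm0⟩ := WithTop.ne_top_iff_exists.mp hp
  have hn : (n : ℕ∞) = pdim X := by exact_mod_cast hn0
  have hm : (m : ℕ∞) = p := by exact_mod_cast hm0
  have h1 : pdLE n X := pdim_le_iff.mp hn.ge
  have hP' : ∀ P : 𝒞, Projective P → pdLE m (F.obj P) := fun P hPr =>
    pdim_le_iff.mp ((hP P hPr).trans hm.ge)
  have h2 := pdLE_map F hepi hker hP' h1
  calc pdim (F.obj X) ≤ ((n + m : ℕ) : ℕ∞) := pdim_le_iff.mpr h2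
    _ = pdim X + p := by rw [Nat.cast_add, hn, hm]

end PdAux

/-- for a cleft extension `(B, A, e, l, i)` of abelian categories with enough
projectives: (i) `pd_B e(X) ≤ pd_A X + p_A`; (ii) `pd_A i(Y) ≤ pd_B Y + p_B`;
(iii) `pd_A l(Y) ≤ max {n_H, pd_B Y + p_B}`. -/
theorem cleftExt_pdim_inequalities (C : CleftExt B A)
    [EnoughProjectives A] [EnoughProjectives B] :
    (∀ X : A, pdim (C.e.obj X) ≤ pdim X + C.pA) ∧
    (∀ Y : B, pdim (C.i.obj Y) ≤ pdim Y + C.pB) ∧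
    (∀ Y : B, pdim (C.l.obj Y) ≤ max C.nH (pdim Y + C.pB)) := by
  haveI := C.e_faithful
  haveI := C.e_preservesFiniteLimits
  haveI := C.e_preservesFiniteColimits
  have hepi_e : ∀ {X₁ X₂ : A} (f : X₁ ⟶ X₂), Epi f → Epi (C.e.map f) := by
    intro _ _ f hf; haveI := hf; exact C.e.map_epi f
  have hker_e : ∀ {X₁ X₂ : A} (f : X₁ ⟶ X₂), Epi f →
      Nonempty (kernel (C.e.map f) ≅ C.e.obj (kernel f)) :=
    fun f _ => ⟨(PreservesKernel.iso C.e f).symm⟩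
  have part1 : ∀ X : A, pdim (C.e.obj X) ≤ pdim X + C.pA := fun X =>
    pdim_map_le C.e hepi_e hker_e C.pA
      (fun P hP => le_iSup₂ (f := fun (P : A) (_ : Projective P) => pdim (C.e.obj P)) P hP) X
  have reflect_iso : ∀ {X₁ X₂ : A} (f : X₁ ⟶ X₂), IsIso (C.e.map f) → IsIso f := by
    intro _ _ f hf
    haveI := hf
    haveI : Mono f := C.e.mono_of_mono_map inferInstance
    haveI : Epi f := C.e.epi_of_epi_map inferInstance
    exact isIso_of_mono_of_epi f
  have emap_i : ∀ {Y₁ Y₂ : B} (f : Y₁ ⟶ Y₂),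
      C.e.map (C.i.map f) = C.iso.hom.app Y₁ ≫ f ≫ C.iso.inv.app Y₂ := by
    intro Y₁ Y₂ f
    have h := C.iso.hom.naturality f
    simp only [Functor.comp_map, Functor.id_map] at h
    rw [← Category.assoc, ← h, Category.assoc, Iso.hom_inv_id_app, Category.comp_id]
  have imap_zero : ∀ (Y₁ Y₂ : B), C.i.map (0 : Y₁ ⟶ Y₂) = 0 := by
    intro Y₁ Y₂
    apply C.e.map_injective
    rw [emap_i, C.e.map_zero]
    simp
  have imap_epi : ∀ {Y₁ Y₂ : B} (f : Y₁ ⟶ Y₂), Epi f → Epi (C.i.map f) := by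
    intro Y₁ Y₂ f hf
    haveI := hf
    apply C.e.epi_of_epi_map
    rw [emap_i]
    infer_instance
  have hker_i : ∀ {Y₁ Y₂ : B} (f : Y₁ ⟶ Y₂), Epi f →
      Nonempty (kernel (C.i.map f) ≅ C.i.obj (kernel f)) := by
    intro Y₁ Y₂ f hf
    haveI := hf
    have hcond : C.i.map (kernel.ι f) ≫ C.i.map f = 0 := by
      rw [← C.i.map_comp, kernel.condition, imap_zero]
    have hcond2 : C.e.map (C.i.map (kernel.ι f)) ≫ C.e.map (C.i.map f) = 0 := by
      rw [← C.e.map_comp, hcond, C.e.map_zero]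
    let κ : C.i.obj (kernel f) ⟶ kernel (C.i.map f) :=
      kernel.lift _ (C.i.map (kernel.ι f)) hcond
    have hκι : κ ≫ kernel.ι (C.i.map f) = C.i.map (kernel.ι f) := kernel.lift_ι _ _ _
    suffices h : IsIso κ by exact ⟨(asIso κ).symm⟩
    apply reflect_iso
    let ψ : C.e.obj (C.i.obj (kernel f)) ⟶ kernel (C.e.map (C.i.map f)) :=
      kernel.lift _ (C.e.map (C.i.map (kernel.ι f))) hcond2
    have hψι : ψ ≫ kernel.ι (C.e.map (C.i.map f)) = C.e.map (C.i.map (kernel.ι f)) :=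
      kernel.lift_ι _ _ _
    have hψeq : C.e.map κ ≫ (PreservesKernel.iso C.e (C.i.map f)).hom = ψ := by
      apply equalizer.hom_ext
      rw [Category.assoc, PreservesKernel.iso_hom, kernelComparison_comp_ι,
        ← C.e.map_comp, hκι, hψι]
    have hcond3 : (kernel.ι (C.e.map (C.i.map f)) ≫ C.iso.hom.app Y₁) ≫ f = 0 := by
      have hnat : C.iso.hom.app Y₁ ≫ f = C.e.map (C.i.map f) ≫ C.iso.hom.app Y₂ := by
        have h := C.iso.hom.naturality f
        simp only [Functor.comp_map, Functor.id_map] at h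
        exact h.symm
      rw [Category.assoc, hnat, ← Category.assoc, kernel.condition, zero_comp]
    let χ : kernel (C.e.map (C.i.map f)) ⟶ kernel f :=
      kernel.lift f (kernel.ι _ ≫ C.iso.hom.app Y₁) hcond3
    have hχι : χ ≫ kernel.ι f = kernel.ι _ ≫ C.iso.hom.app Y₁ := kernel.lift_ι _ _ _
    haveI : Mono χ := by
      have hm : Mono (χ ≫ kernel.ι f) := by rw [hχι]; infer_instance
      exact mono_of_mono χ (kernel.ι f)
    have hψχ : ψ ≫ χ = C.iso.hom.app (kernel f) := by
      rw [← cancel_mono (kernel.ι f), Category.assoc, hχι, ← Category.assoc, hψι]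
      have h := C.iso.hom.naturality (kernel.ι f)
      simp only [Functor.comp_map, Functor.id_map] at h
      exact h
    haveI : Epi χ := by
      have he : Epi (ψ ≫ χ) := by rw [hψχ]; infer_instance
      exact epi_of_epi ψ χ
    haveI : IsIso χ := isIso_of_mono_of_epi χ
    haveI : IsIso ψ := by
      have hi : IsIso (ψ ≫ χ) := by rw [hψχ]; infer_instance
      exact IsIso.of_isIso_comp_right ψ χ
    have heκ : C.e.map κ = ψ ≫ (PreservesKernel.iso C.e (C.i.map f)).inv := by
      rw [← hψeq, Category.assoc, Iso.hom_inv_id, Category.comp_id]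
    rw [heκ]
    infer_instance
  have part2 : ∀ Y : B, pdim (C.i.obj Y) ≤ pdim Y + C.pB := fun Y =>
    pdim_map_le C.i imap_epi hker_i C.pB
      (fun P hP => le_iSup₂ (f := fun (P : B) (_ : Projective P) => pdim (C.i.obj P)) P hP) Y
  have counit_epi : ∀ X : A, Epi (C.adj.counit.app X) := by
    intro X
    constructor
    intro Z u v huv
    apply C.e.map_injective
    have h2 : C.adj.unit.app (C.e.obj X) ≫ C.e.map (C.adj.counit.app X ≫ u)
        = C.adj.unit.app (C.e.obj X) ≫ C.e.map (C.adj.counit.app X ≫ v) := by rw [huv]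
    simpa using h2
  refine ⟨part1, part2, ?_⟩
  intro Y
  rcases eq_or_ne C.nH ⊤ with h | hnH
  · simp [h]
  rcases eq_or_ne (pdim Y + C.pB) ⊤ with h | hfin
  · simp [h]
  obtain ⟨m, hm0⟩ := WithTop.ne_top_iff_exists.mp hnH
  obtain ⟨k, hk0⟩ := WithTop.ne_top_iff_exists.mp hfin
  have hm : (m : ℕ∞) = C.nH := by exact_mod_cast hm0
  have hk : (k : ℕ∞) = pdim Y + C.pB := by exact_mod_cast hk0
  have hiY : pdLE k (C.i.obj Y) := pdim_le_iff.mp ((part2 Y).trans hk.ge)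
  have hH : pdLE m (kernel (C.adj.counit.app (C.i.obj Y))) :=
    pdim_le_iff.mp (le_trans (le_iSup (fun Y => pdim (C.H Y)) Y) hm.ge)
  haveI := counit_epi (C.i.obj Y)
  have hM : pdLE (max m k) (C.l.obj (C.e.obj (C.i.obj Y))) :=
    pdLE_of_epi_of_kernel (C.adj.counit.app (C.i.obj Y)) hH hiY
  have hl : pdLE (max m k) (C.l.obj Y) := pdLE_of_iso (C.l.mapIso (C.iso.app Y)) hM
  refine le_trans (pdim_le_iff.mpr hl) ?_
  rw [← hm, ← hk]
  rcases le_total m k with h | h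
  · rw [max_eq_right h]
    exact le_max_right _ _
  · rw [max_eq_left h]
    exact le_max_left _ _
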